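/- Fix j ∈ {1,…,p}, fix ψ₀ ∈ ℝ, τ ∈ ℝᵖ, and β_ℓ for ℓ ≠ j, and let vⱼ = Xⱼ + τⱼψ₀ (A ∘ Xⱼ) ∈ ℝⁿ. Then βⱼ = 0 is a global minimizer of the function βⱼ ↦ Q(β₁,…,β_p, ψ₀, τ₁,…,τ_p) if and only if |(1/n)·vⱼᵀW R₍₋ⱼ₎| ≤ λ(1−α), where vⱼᵀW R₍₋ⱼ₎ = Σᵢ wᵢ (vⱼ)ᵢ (R₍₋ⱼ₎)ᵢ. -/

import Mathlib

/-- Soft-thresholding operator `S(x, u) = sign(x) · (|x| − u)₊`. -/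
noncomputable def softThresh (x u : ℝ) : ℝ := Real.sign x * max (|x| - u) 0

/-- Reparametrized weighted loss
`L*(θ) = (1/(2n)) Σᵢ wᵢ (Yᵢ − ψ₀Aᵢ − Σⱼ Xᵢⱼβⱼ − Σⱼ ψ₀τⱼβⱼ AᵢXᵢⱼ)²`. -/
noncomputable def Lstar (n p : ℕ) (Y A : Fin n → ℝ) (X : Fin n → Fin p → ℝ)
    (w : Fin n → ℝ) (β : Fin p → ℝ) (ψ0 : ℝ) (τ : Fin p → ℝ) : ℝ :=
  1 / (2 * (n : ℝ)) * ∑ i, w i *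
    (Y i - ψ0 * A i - (∑ j, X i j * β j) - ∑ j, ψ0 * τ j * β j * A i * X i j) ^ 2

/-- Penalized objective
`Q(θ) = L*(θ) + λ(1−α)(Σⱼ|βⱼ| + |ψ₀|) + λα Σⱼ|τⱼ|`. -/
noncomputable def Qobj (n p : ℕ) (Y A : Fin n → ℝ) (X : Fin n → Fin p → ℝ)
    (w : Fin n → ℝ) (lam alpha : ℝ) (β : Fin p → ℝ) (ψ0 : ℝ) (τ : Fin p → ℝ) : ℝ :=
  Lstar n p Y A X w β ψ0 τ
    + lam * (1 - alpha) * ((∑ j, |β j|) + |ψ0|) + lam * alpha * ∑ j, |τ j|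

/-- With `ψ₀`, `τ`, and `β_ℓ (ℓ ≠ j)` fixed and `vⱼ = Xⱼ + τⱼψ₀ (A ∘ Xⱼ)`,
`βⱼ = 0` is a global minimizer of `βⱼ ↦ Q(β, ψ₀, τ)` iff
`|(1/n)·vⱼᵀW R₍₋ⱼ₎| ≤ λ(1−α)`. -/
lemma keyIff (c2 c1 mu : ℝ) (hc2 : 0 ≤ c2) (_hmu : 0 ≤ mu) :
    (∀ t : ℝ, 0 ≤ c2 * t ^ 2 - c1 * t + mu * |t|) ↔ |c1| ≤ mu := by
  constructor
  · intro h
    rw [abs_le]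
    constructor
    · by_contra hc
      push_neg at hc
      have ht : (0:ℝ) < (-c1 - mu) / (c2 + 1) := by
        apply div_pos (by linarith) (by linarith)
      set t := (-c1 - mu) / (c2 + 1) with htdef
      have htx : t * (c2 + 1) = -c1 - mu := by
        rw [htdef, div_mul_cancel₀ _ (ne_of_gt (by linarith))]
      have h1 := h (-t)
      rw [abs_neg, abs_of_pos ht] at h1
      nlinarith [mul_pos ht ht]
    · by_contra hc
      push_neg at hc
      have ht : (0:ℝ) < (c1 - mu) / (c2 + 1) := by
        apply div_pos (by linarith) (by linarith)
      set t := (c1 - mu) / (c2 + 1) with htdef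
      have htx : t * (c2 + 1) = c1 - mu := by
        rw [htdef, div_mul_cancel₀ _ (ne_of_gt (by linarith))]
      have h1 := h t
      rw [abs_of_pos ht] at h1
      nlinarith [mul_pos ht ht]
  · intro h t
    have h1 : c1 * t ≤ mu * |t| :=
      calc c1 * t ≤ |c1 * t| := le_abs_self _
        _ = |c1| * |t| := abs_mul _ _
        _ ≤ mu * |t| := mul_le_mul_of_nonneg_right h (abs_nonneg t)
    nlinarith [mul_nonneg hc2 (sq_nonneg t)]


/-- With `ψ₀`, `τ`, and `β_ℓ (ℓ ≠ j)` fixed and `vⱼ = Xⱼ + τⱼψ₀ (A ∘ Xⱼ)`,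
`βⱼ = 0` is a global minimizer of `βⱼ ↦ Q(β, ψ₀, τ)` iff
`|(1/n)·vⱼᵀW R₍₋ⱼ₎| ≤ λ(1−α)`. -/
theorem stmt7 (n p : ℕ) (hn : 1 ≤ n) (Y A : Fin n → ℝ) (X : Fin n → Fin p → ℝ)
    (w : Fin n → ℝ) (hw : ∀ i, 0 ≤ w i) (hA : ∀ i, A i = 0 ∨ A i = 1)
    (lam alpha : ℝ) (hlam : 0 ≤ lam) (halpha : 0 < alpha ∧ alpha < 1)
    (j : Fin p) (ψ0 : ℝ) (β τ : Fin p → ℝ)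
    (vj : Fin n → ℝ) (hvj : vj = fun i => X i j + τ j * ψ0 * A i * X i j) :
    let Rmj : Fin n → ℝ := fun i =>
      Y i - (∑ l ∈ Finset.univ.erase j, X i l * β l) - ψ0 * A i
        - ∑ l ∈ Finset.univ.erase j, ψ0 * τ l * β l * A i * X i l
    let f : ℝ → ℝ := fun t => Qobj n p Y A X w lam alpha (Function.update β j t) ψ0 τ
    (∀ t : ℝ, f 0 ≤ f t) ↔
      |1 / (n : ℝ) * ∑ i, w i * vj i * Rmj i| ≤ lam * (1 - alpha) := by
  intro Rmj f
  have hn' : (0:ℝ) < (n:ℝ) := by exact_mod_cast Nat.lt_of_lt_of_le Nat.zero_lt_one hn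
  have hsplit : ∀ (g : Fin p → ℝ), ∑ l, g l = g j + ∑ l ∈ Finset.univ.erase j, g l :=
    fun g => (Finset.add_sum_erase _ g (Finset.mem_univ j)).symm
  set S2 := ∑ i, w i * vj i ^ 2 with hS2
  set SB := ∑ i, w i * vj i * Rmj i with hSB
  set SR := ∑ i, w i * Rmj i ^ 2 with hSR
  have hf : ∀ t, f t = 1/(2*(n:ℝ)) * (SR - 2*t*SB + t^2*S2)
      + lam*(1-alpha)*(|t| + ((∑ l ∈ Finset.univ.erase j, |β l|) + |ψ0|))
      + lam*alpha*(∑ l, |τ l|) := by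
    intro t
    have hupd : ∀ l ∈ Finset.univ.erase j, Function.update β j t l = β l :=
      fun l hl => Function.update_of_ne (Finset.ne_of_mem_erase hl) _ _
    have h1 : ∑ l, |Function.update β j t l| = |t| + ∑ l ∈ Finset.univ.erase j, |β l| := by
      rw [hsplit (fun l => |Function.update β j t l|)]
      simp only [Function.update_self]
      congr 1
      exact Finset.sum_congr rfl fun l hl => by rw [hupd l hl]
    have hres : ∀ i, Y i - ψ0 * A i - (∑ l, X i l * Function.update β j t l)
        - (∑ l, ψ0 * τ l * Function.update β j t l * A i * X i l) = Rmj i - t * vj i := by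
      intro i
      rw [hsplit (fun l => X i l * Function.update β j t l),
          hsplit (fun l => ψ0 * τ l * Function.update β j t l * A i * X i l)]
      have e1 : ∑ l ∈ Finset.univ.erase j, X i l * Function.update β j t l
          = ∑ l ∈ Finset.univ.erase j, X i l * β l :=
        Finset.sum_congr rfl fun l hl => by rw [hupd l hl]
      have e2 : ∑ l ∈ Finset.univ.erase j, ψ0 * τ l * Function.update β j t l * A i * X i l
          = ∑ l ∈ Finset.univ.erase j, ψ0 * τ l * β l * A i * X i l :=
        Finset.sum_congr rfl fun l hl => by rw [hupd l hl]
      rw [e1, e2]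
      simp only [Function.update_self, Rmj, hvj]
      ring
    have hsum : ∑ i, w i * (Y i - ψ0 * A i - (∑ l, X i l * Function.update β j t l)
        - ∑ l, ψ0 * τ l * Function.update β j t l * A i * X i l) ^ 2
        = SR - 2*t*SB + t^2*S2 := by
      rw [hS2, hSB, hSR, Finset.mul_sum, Finset.mul_sum, ← Finset.sum_sub_distrib,
        ← Finset.sum_add_distrib]
      refine Finset.sum_congr rfl fun i _ => ?_
      rw [hres i]; ring
    show Lstar n p Y A X w (Function.update β j t) ψ0 τ
        + lam * (1 - alpha) * ((∑ l, |Function.update β j t l|) + |ψ0|)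
        + lam * alpha * ∑ l, |τ l| = _
    rw [h1]
    unfold Lstar
    rw [hsum]
    ring
  have habs0 : |(0:ℝ)| = 0 := abs_zero
  set mu := lam * (1 - alpha) with hmu
  have hmu0 : 0 ≤ mu := mul_nonneg hlam (by linarith [halpha.2])
  have hc2 : 0 ≤ 1/(2*(n:ℝ)) * S2 := by
    apply mul_nonneg (by positivity)
    exact Finset.sum_nonneg fun i _ => mul_nonneg (hw i) (sq_nonneg _)
  have hiff : (∀ t : ℝ, f 0 ≤ f t) ↔
      (∀ t : ℝ, 0 ≤ (1/(2*(n:ℝ)) * S2) * t ^ 2 - (1/(n:ℝ) * SB) * t + mu * |t|) := by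
    refine forall_congr' fun t => ?_
    have heq : f t - f 0 = (1/(2*(n:ℝ)) * S2) * t ^ 2 - (1/(n:ℝ) * SB) * t + mu * |t| := by
      rw [hf t, hf 0, habs0]
      field_simp
      ring
    constructor <;> intro h <;> linarith
  rw [hiff, keyIff _ _ _ hc2 hmu0]
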